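/- arXiv:1401.2577 — 2 statements merged into one kernel-verified Lean document; each statement's English description precedes it below -/
import Mathlib

section
/- Let R and S be ideals in a Noetherian commutative ring with unit, each admitting a primary decomposition with associated primes {Pᵢ} for R and {P*ⱼ} for S, with S proper. If some associated prime Pᵢ of R is contained in some associated prime P*ⱼ of S, then R is not relatively prime to S (i.e., there exists an ideal T ⊄ S with T·R ⊆ S). -/
/-- An ideal is primary (in the element sense). -/
def PrimaryE {R : Type*} [CommRing R] (Q : Ideal R) : Prop :=
  Q ≠ ⊤ ∧ ∀ a b : R, a * b ∈ Q → a ∉ Q → ∃ n : ℕ, 1 ≤ n ∧ b ^ n ∈ Q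

/-- `M = ⨅ Q i` is a minimal primary decomposition. -/
def MinPrimaryDecomp {R : Type*} [CommRing R] {a : ℕ}
    (M : Ideal R) (Q : Fin a → Ideal R) : Prop :=
  (∀ i, PrimaryE (Q i)) ∧
  M = ⨅ i, Q i ∧
  (∀ i, ¬ (⨅ j ∈ ({j | j ≠ i} : Set (Fin a)), Q j) ≤ Q i) ∧
  (∀ i j, i ≠ j → (Q i).radical ≠ (Q j).radical)

/-- If some associated prime of `I` is contained in some associated prime of
the proper ideal `S`, then `I` is not relatively prime to `S`: there is an
ideal `T` not contained in `S` with `T·I ⊆ S`. -/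
theorem stmt16 {R : Type*} [CommRing R] [IsNoetherianRing R]
    (I S : Ideal R) (hS : S ≠ ⊤)
    (a b : ℕ) (Q : Fin a → Ideal R) (Q' : Fin b → Ideal R)
    (hI : MinPrimaryDecomp I Q) (hSdec : MinPrimaryDecomp S Q')
    (hle : ∃ (i : Fin a) (j : Fin b), (Q i).radical ≤ (Q' j).radical) :
    ∃ T : Ideal R, ¬ T ≤ S ∧ T * I ≤ S := by
  obtain ⟨i, j, hij⟩ := hle
  -- pick x in all other components of S but not in Q' j
  obtain ⟨x, hxmem, hxnot⟩ := SetLike.not_le_iff_exists.mp (hSdec.2.2.1 j)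
  have hxk : ∀ k, k ≠ j → x ∈ Q' k := by
    intro k hk
    simp only [Ideal.mem_iInf, Set.mem_setOf_eq] at hxmem
    exact hxmem k hk
  have hSle : S ≤ Q' j := hSdec.2.1 ▸ iInf_le _ j
  have hxS : x ∉ S := fun h => hxnot (hSle h)
  -- I ⊆ rad (Q' j)
  have hIrad : I ≤ (Q' j).radical := by
    calc I ≤ Q i := hI.2.1 ▸ iInf_le _ i
    _ ≤ (Q i).radical := Ideal.le_radical
    _ ≤ (Q' j).radical := hij
  -- Noetherian: some power of the radical is inside Q' j
  obtain ⟨n, hn⟩ := Ideal.exists_radical_pow_le_of_fg (Q' j) (IsNoetherian.noetherian _)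
  have hIn : I ^ n ≤ Q' j := le_trans (Ideal.pow_right_mono hIrad n) hn
  -- x * I^n ⊆ S
  have key : Ideal.span {x} * I ^ n ≤ S := by
    rw [hSdec.2.1]
    refine le_iInf fun k => ?_
    by_cases hk : k = j
    · subst hk
      exact le_trans Ideal.mul_le_right hIn
    · refine le_trans Ideal.mul_le_left ?_
      rw [Ideal.span_le]
      exact Set.singleton_subset_iff.mpr (hxk k hk)
  -- minimal such n
  have hP : ∃ m, Ideal.span {x} * I ^ m ≤ S := ⟨n, key⟩
  classical
  set m := Nat.find hP with hm
  have hmle : Ideal.span {x} * I ^ m ≤ S := Nat.find_spec hP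
  have hm0 : m ≠ 0 := by
    intro h
    have := hmle
    rw [h, pow_zero, mul_one, Ideal.span_le, Set.singleton_subset_iff] at this
    exact hxS this
  refine ⟨Ideal.span {x} * I ^ (m - 1), ?_, ?_⟩
  · have hlt : m - 1 < m := Nat.sub_lt (Nat.pos_of_ne_zero hm0) one_pos
    intro hcon
    exact Nat.find_min hP hlt hcon
  · have : Ideal.span {x} * I ^ (m - 1) * I = Ideal.span {x} * I ^ m := by
      rw [mul_assoc, ← pow_succ, Nat.sub_add_cancel (Nat.one_le_iff_ne_zero.mpr hm0)]
    rw [this]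
    exact hmle
end

section
/- Let M = B₁ ∩ ... ∩ Bₖ = D₁ ∩ ... ∩ Dₗ be two irredundant decompositions of an ideal M into irreducible ideals in a Noetherian commutative ring (irredundant meaning no component contains the intersection of the others). Then k = l. -/
/-- An ideal is irreducible if whenever it is the intersection of two ideals,
it equals one of them. -/
def Ideal.IrreducibleIdeal {R : Type*} [CommRing R] (B : Ideal R) : Prop :=
  ∀ A C : Ideal R, B = A ⊓ C → B = A ∨ B = C

lemma irred_finset_inf {R : Type*} [CommRing R] {b : Ideal R} (hb : b.IrreducibleIdeal)
    {ι : Type*} [DecidableEq ι] (s : Finset ι) (c : ι → Ideal R) :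
    s.Nonempty → b = s.inf c → ∃ j ∈ s, b = c j := by
  induction s using Finset.induction_on with
  | empty => intro hs h; exact absurd hs (by simp)
  | @insert a s ha ih =>
    intro hs h
    rw [Finset.inf_insert] at h
    rcases Finset.eq_empty_or_nonempty s with rfl | hsne
    · simp only [Finset.inf_empty, inf_top_eq] at h
      exact ⟨a, Finset.mem_insert_self a _, h⟩
    · rcases hb _ _ h with h1 | h2
      · exact ⟨a, Finset.mem_insert_self a _, h1⟩
      · obtain ⟨j, hj, hbj⟩ := ih hsne h2
        exact ⟨j, Finset.mem_insert_of_mem hj, hbj⟩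

lemma exchange_lemma {R : Type*} [CommRing R] {M b n : Ideal R} {l : ℕ} {D : Fin l → Ideal R}
    (hl : 0 < l) (hb : b.IrreducibleIdeal) (hM : M = b ⊓ n) (hMD : M = ⨅ j, D j) :
    ∃ j, M = D j ⊓ n := by
  have hMb : M ≤ b := hM ▸ inf_le_left
  have hMn : M ≤ n := hM ▸ inf_le_right
  set x := ⨅ j, (D j ⊓ n ⊔ b) with hx
  have hbx : b ≤ x := le_iInf fun j => le_sup_right
  have hxn : x ⊓ n ≤ b := by
    have h1 : ∀ j, x ⊓ n ≤ D j := by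
      intro j
      have : x ⊓ n ≤ (D j ⊓ n ⊔ b) ⊓ n := inf_le_inf_right n (iInf_le _ j)
      rw [sup_inf_assoc_of_le b inf_le_right] at this
      calc x ⊓ n ≤ D j ⊓ n ⊔ b ⊓ n := this
        _ ≤ D j ⊓ n ⊔ D j ⊓ n := by
            refine sup_le_sup_left ?_ _
            rw [← hM]
            exact le_inf (hMD ▸ iInf_le _ j) hMn
        _ ≤ D j := by simp
    have : x ⊓ n ≤ M := hMD ▸ le_iInf h1
    exact this.trans hMb
  have hxb : x ≤ b := by
    have hxnb : x ≤ n ⊔ b := by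
      refine (iInf_le _ (⟨0, hl⟩ : Fin l)).trans ?_
      exact sup_le_sup_right inf_le_right b
    have := sup_inf_assoc_of_le (y := n) (x := b) (z := x) hbx
    calc x = (b ⊔ n) ⊓ x := (inf_eq_right.mpr (by rwa [sup_comm] at hxnb)).symm
      _ = b ⊔ n ⊓ x := sup_inf_assoc_of_le n hbx
      _ ≤ b ⊔ b := sup_le_sup_left (by rw [inf_comm]; exact hxn) b
      _ = b := sup_idem b
  have hbeq : b = Finset.univ.inf (fun j : Fin l => D j ⊓ n ⊔ b) := by
    rw [Finset.inf_univ_eq_iInf]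
    exact le_antisymm hbx hxb
  obtain ⟨j, -, hj⟩ := irred_finset_inf hb Finset.univ _
    (Finset.univ_nonempty_iff.mpr ⟨⟨0, hl⟩⟩) hbeq
  refine ⟨j, le_antisymm (le_inf (hMD ▸ iInf_le _ j) hMn) ?_⟩
  have hdn : D j ⊓ n ≤ b := sup_eq_right.mp hj.symm
  rw [hM]
  exact le_inf hdn inf_le_right

lemma count_le {R : Type*} [CommRing R] {M : Ideal R} {k l : ℕ}
    {B : Fin k → Ideal R} {D : Fin l → Ideal R}
    (hl : 0 < l) (hBirr : ∀ i, (B i).IrreducibleIdeal)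
    (hBM : M = ⨅ i, B i) (hDM : M = ⨅ j, D j) (T : Finset (Fin k)) :
    ∃ S : Finset (Fin l), S.card ≤ T.card ∧ M = S.inf D ⊓ Tᶜ.inf B := by
  induction T using Finset.induction_on with
  | empty =>
    refine ⟨∅, le_refl _, ?_⟩
    simp [Finset.compl_empty, Finset.inf_univ_eq_iInf, hBM]
  | @insert i T ha ih =>
    obtain ⟨S, hcard, hMS⟩ := ih
    have hiTc : i ∈ Tᶜ := Finset.mem_compl.mpr ha
    have hTc : Tᶜ.inf B = B i ⊓ ((insert i T)ᶜ).inf B := by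
      rw [Finset.compl_insert, ← Finset.inf_insert, Finset.insert_erase hiTc]
    have hM' : M = B i ⊓ (S.inf D ⊓ ((insert i T)ᶜ).inf B) := by
      rw [hMS, hTc]
      ac_rfl
    obtain ⟨j, hj⟩ := exchange_lemma hl (hBirr i) hM' hDM
    refine ⟨insert j S, ?_, ?_⟩
    · calc (insert j S).card ≤ S.card + 1 := Finset.card_insert_le j S
        _ ≤ T.card + 1 := by omega
        _ = (insert i T).card := (Finset.card_insert_of_notMem ha).symm
    · rw [Finset.inf_insert, hj, inf_assoc]

lemma count_dir {R : Type*} [CommRing R] {M : Ideal R} {k l : ℕ}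
    {B : Fin k → Ideal R} {D : Fin l → Ideal R}
    (hBirr : ∀ i, (B i).IrreducibleIdeal)
    (hBM : M = ⨅ i, B i) (hDM : M = ⨅ j, D j)
    (hDshort : ∀ i, ¬ (⨅ j ∈ ({j | j ≠ i} : Set (Fin l)), D j) ≤ D i) :
    l ≤ k := by
  rcases Nat.eq_zero_or_pos l with rfl | hl
  · exact Nat.zero_le k
  obtain ⟨S, hcard, hMS⟩ := count_le hl hBirr hBM hDM Finset.univ
  simp only [Finset.compl_univ, Finset.inf_empty, inf_top_eq] at hMS
  have hS : S = Finset.univ := by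
    by_contra hne
    obtain ⟨j, hj⟩ : ∃ j, j ∉ S := by
      by_contra h
      push_neg at h
      exact hne (Finset.eq_univ_iff_forall.mpr h)
    refine hDshort j ?_
    have h1 : (⨅ j' ∈ ({j' | j' ≠ j} : Set (Fin l)), D j') ≤ S.inf D := by
      refine Finset.le_inf fun b hb => ?_
      exact iInf₂_le b (fun (h : b = j) => hj (h ▸ hb))
    have h2 : S.inf D ≤ D j := by
      rw [← hMS, hDM]
      exact iInf_le _ j
    exact h1.trans h2
  calc l = S.card := by rw [hS, Finset.card_univ, Fintype.card_fin]
    _ ≤ Finset.univ.card := hcard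
    _ = k := by rw [Finset.card_univ, Fintype.card_fin]

/-- Two irredundant decompositions of an ideal into irreducible ideals in a
Noetherian commutative ring have the same number of components. -/
theorem stmt18 {R : Type*} [CommRing R] [IsNoetherianRing R]
    (M : Ideal R) (k l : ℕ) (B : Fin k → Ideal R) (D : Fin l → Ideal R)
    (hBirr : ∀ i, (B i).IrreducibleIdeal) (hDirr : ∀ j, (D j).IrreducibleIdeal)
    (hBM : M = ⨅ i, B i) (hDM : M = ⨅ j, D j)
    (hBshort : ∀ i, ¬ (⨅ j ∈ ({j | j ≠ i} : Set (Fin k)), B j) ≤ B i)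
    (hDshort : ∀ i, ¬ (⨅ j ∈ ({j | j ≠ i} : Set (Fin l)), D j) ≤ D i) :
    k = l := by
  exact le_antisymm (count_dir hDirr hDM hBM hBshort) (count_dir hBirr hBM hDM hDshort)
end
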